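/- Let E be a unital trace-preserving completely positive map on operators of a finite-dimensional Hilbert space and P an orthogonal projection. If rank(E(P)) = rank(P), then E(P) is an orthogonal projection. -/

import Mathlib

open Finset Matrix ComplexOrder

/-- Complete positivity via the existence of a Kraus representation. -/
def IsCP {I J : Type*} [Fintype I] [Fintype J]
    (E : Matrix I I ℂ →ₗ[ℂ] Matrix J J ℂ) : Prop :=
  ∃ (r : ℕ) (K : Fin r → Matrix J I ℂ), ∀ X, E X = ∑ a, K a * X * (K a)ᴴ

section Aux
variable {m : Type*} [Fintype m] [DecidableEq m]

omit [DecidableEq m] in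
lemma aux_psd_sum {ι : Type*} (s : Finset ι) (f : ι → Matrix m m ℂ)
    (h : ∀ i ∈ s, (f i).PosSemidef) : (∑ i ∈ s, f i).PosSemidef :=
  Finset.sum_induction f _ (fun _ _ ha hb => ha.add hb) .zero h

lemma aux_trace_eq_sum_eigs {A : Matrix m m ℂ} (hA : A.IsHermitian) :
    A.trace = ∑ i, (hA.eigenvalues i : ℂ) := by
  conv_lhs => rw [hA.spectral_theorem, Unitary.conjStarAlgAut_apply]
  rw [Matrix.trace_mul_cycle]
  rw [show (star (hA.eigenvectorUnitary : Matrix m m ℂ)) * hA.eigenvectorUnitary = 1 from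
    (Matrix.mem_unitaryGroup_iff').mp hA.eigenvectorUnitary.2, one_mul, trace_diagonal]
  rfl

lemma aux_dot_self {A : Matrix m m ℂ} (hA : A.IsHermitian) (i : m) :
    star ⇑(hA.eigenvectorBasis i) ⬝ᵥ ⇑(hA.eigenvectorBasis i) = 1 := by
  have h1 : ‖hA.eigenvectorBasis i‖ = 1 := hA.eigenvectorBasis.orthonormal.1 i
  have := EuclideanSpace.inner_eq_star_dotProduct (𝕜 := ℂ)
    (hA.eigenvectorBasis i) (hA.eigenvectorBasis i)
  rw [inner_self_eq_norm_sq_to_K, h1] at this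
  rw [dotProduct_comm]; simpa using this.symm

lemma aux_eig01 {A : Matrix m m ℂ} (hA : A.IsHermitian) (hAA : A * A = A) (i : m) :
    hA.eigenvalues i = 0 ∨ hA.eigenvalues i = 1 := by
  have hv := hA.mulVec_eigenvectorBasis i
  have h2 : (A * A) *ᵥ ⇑(hA.eigenvectorBasis i)
      = (hA.eigenvalues i * hA.eigenvalues i) • ⇑(hA.eigenvectorBasis i) := by
    rw [← mulVec_mulVec, hv, mulVec_smul, hv, smul_smul]
  rw [hAA, hv] at h2
  have hne : ⇑(hA.eigenvectorBasis i) ≠ 0 := by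
    intro h
    have := hA.eigenvectorBasis.orthonormal.ne_zero i
    exact this (by ext j; exact congrFun h j)
  have : (hA.eigenvalues i - hA.eigenvalues i * hA.eigenvalues i) • ⇑(hA.eigenvectorBasis i) = 0 := by
    rw [sub_smul, h2, sub_self]
  rcases smul_eq_zero.mp this with h | h
  · have : hA.eigenvalues i * (1 - hA.eigenvalues i) = 0 := by ring_nf; linarith [h]
    rcases mul_eq_zero.mp this with h' | h'
    · exact Or.inl h'
    · exact Or.inr (by linarith)
  · exact absurd h hne

lemma aux_idem_of_eig01 {A : Matrix m m ℂ} (hA : A.IsHermitian)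
    (h : ∀ i, hA.eigenvalues i = 0 ∨ hA.eigenvalues i = 1) : A * A = A := by
  have hD : diagonal (RCLike.ofReal ∘ hA.eigenvalues : m → ℂ) *
      diagonal (RCLike.ofReal ∘ hA.eigenvalues : m → ℂ)
      = diagonal (RCLike.ofReal ∘ hA.eigenvalues : m → ℂ) := by
    rw [diagonal_mul_diagonal]
    refine congrArg diagonal (funext fun i => ?_)
    rcases h i with h' | h' <;> simp [h', Function.comp]
  have hUU : (star (hA.eigenvectorUnitary : Matrix m m ℂ)) * hA.eigenvectorUnitary = 1 :=
    (Matrix.mem_unitaryGroup_iff').mp hA.eigenvectorUnitary.2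
  have hUU' : ∀ X : Matrix m m ℂ, (star (hA.eigenvectorUnitary : Matrix m m ℂ)) *
      ((hA.eigenvectorUnitary : Matrix m m ℂ) * X) = X := fun X => by
    rw [← mul_assoc, hUU, one_mul]
  conv_lhs => rw [hA.spectral_theorem, Unitary.conjStarAlgAut_apply]
  conv_rhs => rw [hA.spectral_theorem, Unitary.conjStarAlgAut_apply]
  simp only [Matrix.mul_assoc]
  rw [hUU', ← Matrix.mul_assoc (diagonal _) (diagonal _), hD]

end Aux

theorem unital_channel_rank_saturation_projection {n : ℕ}
    (E : Matrix (Fin n) (Fin n) ℂ →ₗ[ℂ] Matrix (Fin n) (Fin n) ℂ)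
    (hCP : IsCP E)
    (hTP : ∀ X, (E X).trace = X.trace)
    (hU : E 1 = 1)
    (P : Matrix (Fin n) (Fin n) ℂ)
    (hPh : P.IsHermitian) (hPP : P * P = P)
    (hrank : (E P).rank = P.rank) :
    (E P).IsHermitian ∧ E P * E P = E P := by
  obtain ⟨r, K, hK⟩ := hCP
  have hEpsd : ∀ X : Matrix (Fin n) (Fin n) ℂ, X.PosSemidef → (E X).PosSemidef := by
    intro X hX
    rw [hK]
    exact aux_psd_sum _ _ (fun a _ => hX.mul_mul_conjTranspose_same (K a))
  have hPpsd : P.PosSemidef := by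
    have : Pᴴ * P = P := by rw [hPh.eq, hPP]
    exact this ▸ posSemidef_conjTranspose_mul_self P
  have h1Pmul : (1 - P) * (1 - P) = 1 - P := by
    rw [sub_mul, one_mul, mul_sub, mul_one, hPP]; abel
  have h1Ph : (1 - P).IsHermitian := (isHermitian_one).sub hPh
  have h1Ppsd : (1 - P).PosSemidef := by
    have : (1 - P)ᴴ * (1 - P) = 1 - P := by rw [h1Ph.eq, h1Pmul]
    exact this ▸ posSemidef_conjTranspose_mul_self (1 - P)
  have hQpsd : (E P).PosSemidef := hEpsd P hPpsd
  have hIQpsd : (1 - E P).PosSemidef := by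
    have := hEpsd (1 - P) h1Ppsd
    rwa [map_sub, hU] at this
  have hQ : (E P).IsHermitian := hQpsd.isHermitian
  refine ⟨hQ, ?_⟩
  set lam := hQ.eigenvalues with hlam
  have hlam0 : ∀ i, 0 ≤ lam i := hQpsd.eigenvalues_nonneg
  have hlam1 : ∀ i, lam i ≤ 1 := by
    intro i
    have h := hIQpsd.re_dotProduct_nonneg ⇑(hQ.eigenvectorBasis i)
    have hv := hQ.mulVec_eigenvectorBasis i
    rw [sub_mulVec, one_mulVec, hv, dotProduct_sub, aux_dot_self hQ i,
      RCLike.real_smul_eq_coe_smul (K := ℂ), dotProduct_smul, aux_dot_self hQ i] at h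
    simp only [smul_eq_mul, mul_one] at h
    have : (0:ℝ) ≤ 1 - lam i := by simpa using h
    linarith
  -- eigenvalues of P
  have hmu01 := aux_eig01 hPh hPP
  -- trace equality
  have htr : ∑ i, (lam i : ℂ) = ∑ i, (hPh.eigenvalues i : ℂ) := by
    rw [← aux_trace_eq_sum_eigs hQ, ← aux_trace_eq_sum_eigs hPh]
    exact hTP P
  have htrR : ∑ i, lam i = ∑ i, hPh.eigenvalues i := by
    have := htr
    push_cast at this
    exact_mod_cast this
  -- sum of mu = rank P
  have hsum_mu : ∑ i, hPh.eigenvalues i = (P.rank : ℝ) := by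
    rw [hPh.rank_eq_card_non_zero_eigs, Fintype.card_subtype]
    rw [← Finset.sum_filter_ne_zero]
    rw [Finset.sum_congr rfl (fun i hi => show hPh.eigenvalues i = 1 from
      ((hmu01 i).resolve_left (Finset.mem_filter.mp hi).2)), Finset.sum_const,
      nsmul_eq_mul, mul_one]
  -- sum of lam = rank Q = card nonzero
  have hcard : (Finset.univ.filter (fun i => lam i ≠ 0)).card = (E P).rank := by
    rw [hQ.rank_eq_card_non_zero_eigs, Fintype.card_subtype]
  have hsum_lam : ∑ i ∈ Finset.univ.filter (fun i => lam i ≠ 0), lam i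
      = ∑ i ∈ Finset.univ.filter (fun i => lam i ≠ 0), (1:ℝ) := by
    rw [Finset.sum_filter_ne_zero, htrR, hsum_mu, Finset.sum_const, nsmul_eq_mul, mul_one,
      hcard, hrank]
  have hlam01 : ∀ i, lam i = 0 ∨ lam i = 1 := by
    intro i
    by_cases h0 : lam i = 0
    · exact Or.inl h0
    · right
      have hmem : i ∈ Finset.univ.filter (fun i => lam i ≠ 0) := by simp [h0]
      exact (Finset.sum_eq_sum_iff_of_le (fun j _ => hlam1 j)).mp hsum_lam i hmem
  exact aux_idem_of_eig01 hQ hlam01
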